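/- Let R be a Dedekind domain and M a finitely generated torsion R-module. Let u be a positive integer such that for every associated prime m of M, the minimal number of generators of the localization M_m over R_m is at most u. Then the minimal number of generators of M over R is at most u. -/

import Mathlib

open Submodule

private lemma pad_finset {M : Type*} [AddCommMonoid M] {u : ℕ} (t : Finset M) (h : t.card ≤ u) :
    ∃ g : Fin u → M, (∀ j, g j ∈ t ∨ g j = 0) ∧ (t : Set M) ⊆ Set.range g := by
  refine ⟨fun j => t.toList.getD j 0, fun j => ?_, fun x hx => ?_⟩
  · show t.toList.getD (j : ℕ) 0 ∈ t ∨ t.toList.getD (j : ℕ) 0 = 0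
    by_cases hj : (j : ℕ) < t.toList.length
    · left
      rw [List.getD_eq_getElem _ _ hj]
      exact Finset.mem_toList.mp (List.getElem_mem hj)
    · right
      exact List.getD_eq_default _ _ (le_of_not_gt hj)
  · obtain ⟨i, hi, hix⟩ := List.mem_iff_getElem.mp (Finset.mem_toList.mpr (Finset.mem_coe.mp hx))
    have hiu : i < u := lt_of_lt_of_le (by simpa [Finset.length_toList] using hi) h
    refine ⟨⟨i, hiu⟩, ?_⟩
    show t.toList.getD ((⟨i, hiu⟩ : Fin u) : ℕ) 0 = x
    rw [List.getD_eq_getElem _ _ (show ((⟨i, hiu⟩ : Fin u) : ℕ) < t.toList.length from hi)]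
    exact hix

private lemma descend_smul {R M : Type*} [CommRing R] [AddCommGroup M] [Module R M]
    {p : Ideal R} (hmax : p.IsMaximal) (e : ℕ) {ρ : R} (hρ : ρ ∉ p)
    {y : M} (hy : y ∈ Submodule.torsionBySet R M ((p ^ e : Ideal R) : Set R))
    {Q : Submodule R M} (hQ : ρ • y ∈ Q) : y ∈ Q := by
  have h1 : Ideal.span {ρ} ⊔ p = ⊤ := by
    obtain ⟨c, i, hi, hci⟩ := hmax.exists_inv hρ
    rw [Ideal.eq_top_iff_one, ← hci]
    exact add_mem (Ideal.mem_sup_left (Ideal.mem_span_singleton'.mpr ⟨c, rfl⟩))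
      (Ideal.mem_sup_right hi)
  have h2 : Ideal.span {ρ} ⊔ p ^ e = ⊤ := Ideal.sup_pow_eq_top h1
  obtain ⟨x, hx, a, ha, hxa⟩ := Submodule.mem_sup.mp (h2 ▸ Submodule.mem_top (x := (1 : R)))
  obtain ⟨c, rfl⟩ := Ideal.mem_span_singleton'.mp hx
  have hay : a • y = 0 := (Submodule.mem_torsionBySet_iff _ _).mp hy ⟨a, ha⟩
  have : y = c • (ρ • y) := by
    conv_lhs => rw [← one_smul R y, ← hxa, add_smul, hay, add_zero, mul_smul]
  rw [this]
  exact Q.smul_mem c hQ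

private lemma loc_descend {R M : Type*} [CommRing R] [AddCommGroup M] [Module R M]
    {p : Ideal R} [hp : p.IsPrime] (hmax : p.IsMaximal) (e : ℕ)
    (s : Finset (LocalizedModule p.primeCompl M))
    (hspan : Submodule.span (Localization p.primeCompl)
      (s : Set (LocalizedModule p.primeCompl M)) = ⊤) :
    ∃ t : Finset M, t.card ≤ s.card ∧
      Submodule.torsionBySet R M ((p ^ e : Ideal R) : Set R)
        ≤ Submodule.span R (t : Set M) := by
  classical
  have hrep : ∀ z : LocalizedModule p.primeCompl M, ∃ (m : M) (σ : p.primeCompl),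
      LocalizedModule.mk m σ = z := fun z =>
    z.induction_on fun m σ => ⟨m, σ, rfl⟩
  choose num den hnum using hrep
  refine ⟨s.image num, Finset.card_image_le, ?_⟩
  set f := LocalizedModule.mkLinearMap p.primeCompl M with hf
  set t : Finset M := s.image num with ht
  have hcancel : ∀ (m : M) (σ : p.primeCompl), ((σ : R) • LocalizedModule.mk m σ) = f m := by
    intro m σ
    rw [LocalizedModule.smul'_mk, ← Submonoid.smul_def, LocalizedModule.mk_cancel]
    rfl
  have hs_sub : ∀ z ∈ s, z ∈ Submodule.span (Localization p.primeCompl) (f '' (t : Set M)) := by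
    intro z hz
    have hu : IsUnit (algebraMap R (Localization p.primeCompl) (den z : R)) :=
      IsLocalization.map_units _ (den z)
    have h2 : f (num z) ∈ Submodule.span (Localization p.primeCompl) (f '' (t : Set M)) :=
      Submodule.subset_span ⟨num z, by simp [ht, Finset.mem_image]; exact ⟨z, hz, rfl⟩, rfl⟩
    have h3 : ((hu.unit⁻¹ : _) : Localization p.primeCompl) • f (num z) ∈
        Submodule.span (Localization p.primeCompl) (f '' (t : Set M)) :=
      Submodule.smul_mem _ _ h2
    have h4 : ((hu.unit⁻¹ : _) : Localization p.primeCompl) • f (num z) = z := by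
      rw [← hcancel (num z) (den z), hnum z,
        ← algebraMap_smul (Localization p.primeCompl) (den z : R) z,
        smul_smul, IsUnit.val_inv_mul, one_smul]
    rwa [h4] at h3
  have htop : Submodule.span (Localization p.primeCompl) (f '' (t : Set M)) = ⊤ := by
    rw [eq_top_iff, ← hspan]
    exact Submodule.span_le.mpr hs_sub
  have hloc' : (Submodule.span R (t : Set M)).localized' (Localization p.primeCompl)
      p.primeCompl f = ⊤ := by
    rw [Submodule.localized'_span, htop]
  intro y hy
  have hyloc : f y ∈ (Submodule.span R (t : Set M)).localized' (Localization p.primeCompl)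
      p.primeCompl f := by rw [hloc']; trivial
  obtain ⟨m, hm, σ, hmk⟩ := (Submodule.mem_localized' _ _ _ _ _).mp hyloc
  have hfy : f y = LocalizedModule.mk y 1 := by
    rw [hf, LocalizedModule.mkLinearMap_apply]
  have hmk' : LocalizedModule.mk m σ = LocalizedModule.mk y 1 :=
    (IsLocalizedModule.mk_eq_mk' σ m).trans (hmk.trans hfy)
  obtain ⟨τ, hτ⟩ := LocalizedModule.mk_eq.mp hmk'
  have hτ' : ((τ * σ : p.primeCompl) : R) • y = (τ : R) • m := by
    have := hτ
    simp only [Submonoid.smul_def, one_smul, smul_smul] at this ⊢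
    rw [Submonoid.coe_mul]
    exact this.symm
  have hmem : ((τ * σ : p.primeCompl) : R) • y ∈ Submodule.span R (t : Set M) := by
    rw [hτ']
    exact Submodule.smul_mem _ _ hm
  exact descend_smul hmax e (τ * σ).2 hy hmem

theorem stmt_13 {R M : Type*} [CommRing R] [IsDomain R] [IsDedekindDomain R]
    [AddCommGroup M] [Module R M] [Module.Finite R M]
    (htor : Module.IsTorsion R M)
    (u : ℕ) (hu : 0 < u)
    (hloc : ∀ (m : Ideal R) (hm : m ∈ associatedPrimes R M),
      ∃ s : Finset (LocalizedModule (@Ideal.primeCompl R _ m hm.1) M),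
        s.card ≤ u ∧
          Submodule.span (Localization (@Ideal.primeCompl R _ m hm.1))
            ((s : Set (LocalizedModule (@Ideal.primeCompl R _ m hm.1) M))) = ⊤) :
    ∃ s : Finset M, s.card ≤ u ∧ Submodule.span R (s : Set M) = ⊤ := by
  classical
  obtain ⟨P, _, hPprime, e, hint⟩ := Submodule.exists_isInternal_prime_power_torsion htor
  set N : P → Submodule R M :=
    fun p => Submodule.torsionBySet R M (((p : Ideal R) ^ e p : Ideal R) : Set R) with hN
  have htop : (⨆ p : P, N p) = ⊤ := hint.submodule_iSup_eq_top
  have hmax : ∀ p : P, (p : Ideal R).IsMaximal := fun p =>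
    Ideal.IsPrime.isMaximal (Ideal.isPrime_of_prime (hPprime p p.2)) (hPprime p p.2).ne_zero
  -- the killing ideals
  set J : P → Ideal R := fun p => ∏ q ∈ Finset.univ.erase p, ((q : Ideal R) ^ e q) with hJ
  have hJ_le : ∀ p q : P, q ≠ p → J p ≤ (q : Ideal R) ^ e q := fun p q hqp =>
    le_trans Ideal.prod_le_inf (Finset.inf_le (Finset.mem_erase.mpr ⟨hqp, Finset.mem_univ q⟩))
  have hJkill : ∀ (p q : P), q ≠ p → ∀ x ∈ N q, ∀ r ∈ J p, r • x = 0 := by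
    intro p q hqp x hx r hr
    exact (Submodule.mem_torsionBySet_iff _ _).mp hx ⟨r, hJ_le p q hqp hr⟩
  have hJp : ∀ p : P, ∃ r, r ∈ J p ∧ r ∉ (p : Ideal R) := by
    intro p
    by_contra hcon
    push_neg at hcon
    have hle : J p ≤ (p : Ideal R) := fun r hr => hcon r hr
    haveI : (p : Ideal R).IsPrime := Ideal.isPrime_of_prime (hPprime p p.2)
    obtain ⟨q, hq, hqle⟩ := (Ideal.IsPrime.prod_le (by assumption)).mp hle
    have : (q : Ideal R) ≤ (p : Ideal R) := Ideal.IsPrime.le_of_pow_le hqle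
    have heq : (q : Ideal R) = (p : Ideal R) :=
      (hmax q).eq_of_le (Ideal.IsPrime.ne_top (by assumption)) this
    exact (Finset.mem_erase.mp hq).1 (Subtype.ext heq)
  choose r hrJ hrp using hJp
  -- r p maps M into N p
  have hrN : ∀ p : P, ∀ m : M, r p • m ∈ N p := by
    intro p0 m
    have hm : m ∈ ⨆ q, N q := by rw [htop]; trivial
    clear htop
    refine @Submodule.iSup_induction R M _ _ _ _ N (fun x => r p0 • x ∈ N p0) m hm ?_ ?_ ?_
    · intro q x hx
      show r p0 • x ∈ N p0
      by_cases hq : q = p0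
      · subst hq; exact Submodule.smul_mem _ _ hx
      · rw [hJkill p0 q hq x hx (r p0) (hrJ p0)]; exact (N p0).zero_mem
    · show r p0 • (0:M) ∈ N p0
      rw [smul_zero]; exact (N p0).zero_mem
    · intro x y hx hy
      show r p0 • (x + y) ∈ N p0
      rw [smul_add]; exact (N p0).add_mem hx hy
  -- local generators for each component
  have hg : ∀ p : P, ∃ g : Fin u → M, (∀ j, g j ∈ N p) ∧ N p ≤ span R (Set.range g) := by
    intro p
    by_cases hbot : N p = ⊥
    · exact ⟨0, fun j => (N p).zero_mem, by rw [hbot]; exact bot_le⟩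
    · obtain ⟨y, hyN, hy0⟩ := Submodule.ne_bot_iff _ |>.mp hbot
      obtain ⟨P', hP', hleP'⟩ := exists_le_isAssociatedPrime_of_isNoetherianRing R y hy0
      have hpow : ((p : Ideal R) ^ e p) ≤ (Submodule.span R {y}).annihilator := by
        intro a ha
        rw [Submodule.mem_annihilator_span_singleton]
        exact (Submodule.mem_torsionBySet_iff _ _).mp hyN ⟨a, ha⟩
      haveI := hP'.isPrime
      have hle : (p : Ideal R) ≤ P' := Ideal.IsPrime.le_of_pow_le (hpow.trans ((Submodule.bot_colon' (R := R) (M := M) (S := ({y} : Set M))) ▸ hleP'))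
      have hPp : P' = (p : Ideal R) := ((hmax p).eq_of_le hP'.isPrime.ne_top hle).symm
      have hassoc : (p : Ideal R) ∈ associatedPrimes R M := hPp ▸ hP'
      obtain ⟨s, hscard, hsspan⟩ := hloc (p : Ideal R) hassoc
      haveI : (p : Ideal R).IsPrime := hassoc.1
      obtain ⟨t, htcard, htle⟩ := loc_descend (hmax p) (e p) s hsspan
      set t' : Finset M := t.image (fun x => r p • x) with ht'
      have hmapspan : Submodule.span R (t' : Set M) =
          Submodule.map (LinearMap.lsmul R M (r p)) (Submodule.span R (t : Set M)) := by
        rw [Submodule.map_span, ht', Finset.coe_image]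
        rfl
      have ht'le : N p ≤ Submodule.span R (t' : Set M) := by
        intro z hz
        refine descend_smul (hmax p) (e p) (hrp p) hz ?_
        rw [hmapspan]
        exact ⟨z, htle hz, rfl⟩
      obtain ⟨g, hg1, hg2⟩ := pad_finset t'
        (le_trans Finset.card_image_le (le_trans htcard hscard))
      refine ⟨g, fun j => ?_, le_trans ht'le (Submodule.span_mono hg2)⟩
      rcases hg1 j with h | h
      · obtain ⟨x, _, hxe⟩ := Finset.mem_image.mp h
        rw [← hxe]
        exact hrN p x
      · rw [h]; exact (N p).zero_mem
  choose g hg1 hg2 using hg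
  -- combine
  set G : Fin u → M := fun j => ∑ p : P, g p j with hG
  refine ⟨Finset.image G Finset.univ, le_trans Finset.card_image_le (by simp), ?_⟩
  refine le_antisymm le_top ?_
  rw [← htop]
  refine iSup_le fun p => ?_
  intro y hy
  refine descend_smul (hmax p) (e p) (hrp p) hy ?_
  have h2 : ∀ j, r p • G j = r p • g p j := by
    intro j
    rw [hG]
    simp only
    rw [Finset.smul_sum]
    refine Finset.sum_eq_single p (fun q _ hq => ?_) (by simp)
    exact hJkill p q hq (g q j) (hg1 q j) (r p) (hrJ p)
  have h1 : y ∈ span R (Set.range (g p)) := hg2 p hy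
  have h3 : r p • y ∈ Submodule.map (LinearMap.lsmul R M (r p))
      (span R (Set.range (g p))) := ⟨y, h1, rfl⟩
  rw [Submodule.map_span] at h3
  refine Submodule.span_le.mpr ?_ h3
  rintro _ ⟨x, ⟨j, rfl⟩, rfl⟩
  have : (LinearMap.lsmul R M (r p)) (g p j) = r p • G j := by
    rw [h2 j]; rfl
  rw [this]
  exact Submodule.smul_mem _ _ (Submodule.subset_span (by simp))
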